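/- arXiv:1111.2895 — 2 statements merged into one kernel-verified Lean document; each statement's English description precedes it below -/
import Mathlib

section
/- For every q ≥ 1 and n ≥ 5, the diameter of the graph AΓ_n^q equals 2. -/
/-- The set of even derangements: fixed-point-free elements of the alternating group. -/
def evenDerangements (n : ℕ) : Set (alternatingGroup (Fin n)) :=
  {σ | ∀ i : Fin n, (σ : Equiv.Perm (Fin n)) i ≠ i}

lemma evenDerangements_inv {n : ℕ} {g : alternatingGroup (Fin n)}
    (hg : g ∈ evenDerangements n) : g⁻¹ ∈ evenDerangements n := by
  intro i hi
  apply hg i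
  have h1 : ((g : Equiv.Perm (Fin n)))⁻¹ i = i := by
    simpa using hi
  conv_lhs => rw [← h1]
  simp

/-- The tensor power `AΓ_n^q` of the even derangement graph. -/
def AGamma (n q : ℕ) : SimpleGraph (Fin q → alternatingGroup (Fin n)) where
  Adj σ τ := σ ≠ τ ∧ ∀ k, σ k * (τ k)⁻¹ ∈ evenDerangements n
  symm := ⟨by
    rintro σ τ ⟨hne, h⟩
    refine ⟨hne.symm, fun k => ?_⟩
    have := evenDerangements_inv (h k)
    simpa [mul_inv_rev] using this⟩
  loopless := ⟨fun σ h => h.1 rfl⟩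

/-- The even derangement graph `AΓ_n`. -/
def AGammaOne (n : ℕ) : SimpleGraph (alternatingGroup (Fin n)) where
  Adj σ τ := σ ≠ τ ∧ σ * τ⁻¹ ∈ evenDerangements n
  symm := ⟨by
    rintro σ τ ⟨hne, h⟩
    refine ⟨hne.symm, ?_⟩
    have := evenDerangements_inv h
    simpa [mul_inv_rev] using this⟩
  loopless := ⟨fun σ h => h.1 rfl⟩

/-- The maximum independent set candidates `B_{i,j}^{(k)}`. -/
def B (n q : ℕ) (i j : Fin n) (k : Fin q) : Set (Fin q → alternatingGroup (Fin n)) :=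
  {σ | (σ k : Equiv.Perm (Fin n)) i = j}

/-- A set of vertices is independent if no two of its members are adjacent. -/
def IsIndep {V : Type*} (G : SimpleGraph V) (s : Set V) : Prop :=
  s.Pairwise fun u v => ¬ G.Adj u v

set_option maxRecDepth 40000 in
lemma exists_avoid : ∀ (m : ℕ), 5 ≤ m → ∀ (g : Equiv.Perm (Fin m)) (s : ℤˣ),
    ∃ d : Equiv.Perm (Fin m), Equiv.Perm.sign d = s ∧ ∀ x, d x ≠ x ∧ d x ≠ g x := by
  intro m hm
  induction m, hm using Nat.le_induction with
  | base => decide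
  | succ n hn ih =>
    intro g s
    set h : Equiv.Perm (Fin (n+1)) := Equiv.swap 0 (g 0) * g with hh
    have h0 : h 0 = 0 := by simp [hh]
    set σ := (Equiv.Perm.decomposeFin h).2 with hσ
    obtain ⟨d', hd's, hd'⟩ := ih σ (-s)
    have hsym : Equiv.Perm.decomposeFin.symm ((Equiv.Perm.decomposeFin h).1, σ) = h := by
      rw [hσ, Prod.mk.eta, Equiv.symm_apply_apply]
    have hp1 : (Equiv.Perm.decomposeFin h).1 = 0 := by
      conv_lhs => rw [← Equiv.Perm.decomposeFin_symm_apply_zero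
        (Equiv.Perm.decomposeFin h).1 σ]
      rw [hsym, h0]
    rw [hp1] at hsym
    have hsucc : ∀ i : Fin n, h i.succ = (σ i).succ := by
      intro i
      rw [← hsym, Equiv.Perm.decomposeFin_symm_apply_succ, Equiv.swap_self, Equiv.refl_apply]
    have hg : ∀ x, Equiv.swap 0 (g 0) (h x) = g x := by
      intro x; rw [hh]; simp
    have inj1 : Function.Injective fun a : Fin n => (d' a).succ :=
      fun x y hxy => d'.injective (Fin.succ_injective _ hxy)
    have inj2 : Function.Injective fun a : Fin n => g a.succ :=
      fun x y hxy => Fin.succ_injective _ (g.injective hxy)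
    have ha : ∃ a : Fin n, (d' a).succ ≠ g 0 ∧ g a.succ ≠ 0 := by
      by_contra hcon
      push_neg at hcon
      have key : ∀ a : Fin n, (d' a).succ = g 0 ∨ g a.succ = 0 := by
        intro a
        by_cases hP : (d' a).succ = g 0
        · exact Or.inl hP
        · exact Or.inr (hcon a hP)
      have e01 : (⟨0, by omega⟩ : Fin n) ≠ ⟨1, by omega⟩ := by simp [Fin.ext_iff]
      have e02 : (⟨0, by omega⟩ : Fin n) ≠ ⟨2, by omega⟩ := by simp [Fin.ext_iff]
      have e12 : (⟨1, by omega⟩ : Fin n) ≠ ⟨2, by omega⟩ := by simp [Fin.ext_iff]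
      rcases key ⟨0, by omega⟩ with p0 | q0 <;> rcases key ⟨1, by omega⟩ with p1 | q1 <;>
        rcases key ⟨2, by omega⟩ with p2 | q2
      · exact e01 (inj1 (p0.trans p1.symm))
      · exact e01 (inj1 (p0.trans p1.symm))
      · exact e02 (inj1 (p0.trans p2.symm))
      · exact e12 (inj2 (q1.trans q2.symm))
      · exact e12 (inj1 (p1.trans p2.symm))
      · exact e02 (inj2 (q0.trans q2.symm))
      · exact e01 (inj2 (q0.trans q1.symm))
      · exact e01 (inj2 (q0.trans q1.symm))
    obtain ⟨a, ha1, ha2⟩ := ha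
    refine ⟨Equiv.Perm.decomposeFin.symm ((d' a).succ, d'), ?_, ?_⟩
    · rw [Equiv.Perm.decomposeFin.symm_sign, hd's, if_neg (Fin.succ_ne_zero _)]
      simp
    · intro x
      refine Fin.cases ?_ ?_ x
      · rw [Equiv.Perm.decomposeFin_symm_apply_zero]
        exact ⟨Fin.succ_ne_zero _, ha1⟩
      · intro i
        rw [Equiv.Perm.decomposeFin_symm_apply_succ]
        by_cases hia : i = a
        · subst hia
          rw [Equiv.swap_apply_right]
          exact ⟨(Fin.succ_ne_zero i).symm, ha2.symm⟩
        · have hne1 : (d' i).succ ≠ 0 := Fin.succ_ne_zero _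
          have hne2 : (d' i).succ ≠ (d' a).succ :=
            fun hc => hia (d'.injective (Fin.succ_injective _ hc))
          rw [Equiv.swap_apply_of_ne_of_ne hne1 hne2]
          constructor
          · exact fun hc => (hd' i).1 (Fin.succ_injective _ hc)
          · intro hc
            rw [← hg i.succ, hsucc i] at hc
            rcases eq_or_ne ((σ i).succ) (g 0) with he | he
            · rw [he, Equiv.swap_apply_right] at hc
              exact Fin.succ_ne_zero _ hc
            · rw [Equiv.swap_apply_of_ne_of_ne (Fin.succ_ne_zero _) he] at hc
              exact (hd' i).2 (Fin.succ_injective _ hc)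

lemma exists_common_neighbor {n : ℕ} (hn : 5 ≤ n) (α β : alternatingGroup (Fin n)) :
    ∃ ρ : alternatingGroup (Fin n),
      ρ * α⁻¹ ∈ evenDerangements n ∧ ρ * β⁻¹ ∈ evenDerangements n := by
  obtain ⟨d, hds, hd⟩ := exists_avoid n hn
    ((α * β⁻¹ : alternatingGroup (Fin n)) : Equiv.Perm (Fin n)) 1
  set D : alternatingGroup (Fin n) := ⟨d, Equiv.Perm.mem_alternatingGroup.2 hds⟩ with hD
  refine ⟨D * β, ?_, ?_⟩
  · intro i
    set j := (β : Equiv.Perm (Fin n)) ((α : Equiv.Perm (Fin n))⁻¹ i) with hj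
    have hcoe : ((D * β * α⁻¹ : alternatingGroup (Fin n)) : Equiv.Perm (Fin n)) i = d j := by
      simp [hD, hj, Equiv.Perm.mul_apply]
    have hgj : ((α * β⁻¹ : alternatingGroup (Fin n)) : Equiv.Perm (Fin n)) j = i := by
      simp [hj, Equiv.Perm.mul_apply]
    rw [hcoe]
    exact fun hc => (hd j).2 (hc.trans hgj.symm)
  · intro i
    have hcoe : ((D * β * β⁻¹ : alternatingGroup (Fin n)) : Equiv.Perm (Fin n)) i = d i := by
      simp [hD]
    rw [hcoe]
    exact (hd i).1

lemma exists_special (n : ℕ) (hn : 5 ≤ n) (i3 : Fin n) (h3 : (i3 : ℕ) = 3) :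
    ∃ c : alternatingGroup (Fin n), c ≠ 1 ∧ (c : Equiv.Perm (Fin n)) i3 = i3 := by
  set i0 : Fin n := ⟨0, by omega⟩ with hi0
  set i1 : Fin n := ⟨1, by omega⟩ with hi1
  set i2 : Fin n := ⟨2, by omega⟩ with hi2
  have e01 : i0 ≠ i1 := by simp [hi0, hi1, Fin.ext_iff]
  have e12 : i1 ≠ i2 := by simp [hi1, hi2, Fin.ext_iff]
  have e20 : i2 ≠ i0 := by simp [hi2, hi0, Fin.ext_iff]
  have e30 : i3 ≠ i0 := by simp [hi0, Fin.ext_iff, h3]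
  have e31 : i3 ≠ i1 := by simp [hi1, Fin.ext_iff, h3]
  have e32 : i3 ≠ i2 := by simp [hi2, Fin.ext_iff, h3]
  set c0 : Equiv.Perm (Fin n) := Equiv.swap i0 i1 * Equiv.swap i1 i2 with hc0
  have hc0sign : Equiv.Perm.sign c0 = 1 := by
    rw [hc0, map_mul, Equiv.Perm.sign_swap e01, Equiv.Perm.sign_swap e12]
    norm_num
  have hc0i1 : c0 i1 = i2 := by
    rw [hc0, Equiv.Perm.mul_apply, Equiv.swap_apply_left,
      Equiv.swap_apply_of_ne_of_ne e20 e12.symm]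
  have hc0i3 : c0 i3 = i3 := by
    rw [hc0, Equiv.Perm.mul_apply, Equiv.swap_apply_of_ne_of_ne e31 e32,
      Equiv.swap_apply_of_ne_of_ne e30 e31]
  refine ⟨⟨c0, Equiv.Perm.mem_alternatingGroup.2 hc0sign⟩, ?_, hc0i3⟩
  intro h
  have h2 : c0 = (1 : Equiv.Perm (Fin n)) := congrArg Subtype.val h
  rw [h2] at hc0i1
  exact e12 hc0i1

lemma exists_far_pair (n q : ℕ) (hq : 1 ≤ q) (hn : 5 ≤ n) :
    ∃ u v : Fin q → alternatingGroup (Fin n), u ≠ v ∧ ¬ (AGamma n q).Adj u v := by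
  have h3n : 3 < n := by omega
  obtain ⟨c, hc1, hc3⟩ := exists_special n hn ⟨3, h3n⟩ rfl
  refine ⟨fun _ => 1, fun _ => c, ?_, ?_⟩
  · intro he
    exact hc1 (congrFun he ⟨0, hq⟩).symm
  · rintro ⟨-, hadj⟩
    have hmem := hadj ⟨0, hq⟩
    apply hmem ⟨3, h3n⟩
    have hco : (((1 : alternatingGroup (Fin n)) * c⁻¹ : alternatingGroup (Fin n)) :
        Equiv.Perm (Fin n)) = ((c : Equiv.Perm (Fin n)))⁻¹ := by
      simp
    rw [hco]
    conv_lhs => rw [← hc3]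
    exact Equiv.symm_apply_apply _ _

/-- the diameter of `AΓ_n^q` is 2 for `q ≥ 1`, `n ≥ 5`. -/
theorem AGamma_pow_diam (n q : ℕ) (hq : 1 ≤ q) (hn : 5 ≤ n) :
    (AGamma n q).diam = 2 := by
  have hn0 : 0 < n := by omega
  set G := AGamma n q with hG
  have hub : ∀ u v, G.edist u v ≤ 2 := by
    intro u v
    choose w hw1 hw2 using fun k => exists_common_neighbor hn (u k) (v k)
    have hwu : G.Adj w u := by
      refine ⟨?_, hw1⟩
      intro he
      apply hw1 ⟨0, hq⟩ ⟨0, hn0⟩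
      simp [he]
    have hwv : G.Adj w v := by
      refine ⟨?_, hw2⟩
      intro he
      apply hw2 ⟨0, hq⟩ ⟨0, hn0⟩
      simp [he]
    calc G.edist u v
        ≤ ((SimpleGraph.Walk.cons hwu.symm
            (SimpleGraph.Walk.cons hwv SimpleGraph.Walk.nil)).length : ℕ∞) :=
          SimpleGraph.edist_le _
      _ = 2 := by simp
  obtain ⟨u, v, hne, hnadj⟩ := exists_far_pair n q hq hn
  have hedist : G.edist u v = 2 := by
    have hle := hub u v
    have het : G.edist u v ≠ ⊤ := fun h => by rw [h] at hle; exact absurd hle (by simp)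
    obtain ⟨k, hk⟩ := WithTop.ne_top_iff_exists.1 het
    have h0 : G.edist u v ≠ 0 := by
      rw [Ne, SimpleGraph.edist_eq_zero_iff]; exact hne
    have h1 : G.edist u v ≠ 1 := by
      rw [Ne, SimpleGraph.edist_eq_one_iff_adj]; exact hnadj
    rw [← hk] at hle h0 h1 ⊢
    have hk2 : k ≤ 2 := by
      rw [show ((2:ℕ∞)) = ((2:ℕ):ℕ∞) by rfl] at hle
      exact Nat.cast_le.mp hle
      
    have hk0 : k ≠ 0 := by
      intro h; rw [h] at h0; exact h0 rfl
    have hk1 : k ≠ 1 := by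
      intro h; rw [h] at h1; exact h1 rfl
    have : k = 2 := by omega
    rw [this]; rfl
  have hediam : G.ediam = 2 :=
    le_antisymm (SimpleGraph.ediam_le_of_edist_le hub)
      (hedist ▸ SimpleGraph.edist_le_ediam)
  rw [SimpleGraph.diam, hediam]
  rfl
end

section
/- For every q ≥ 1 and n ≥ 5, the chromatic number of AΓ_n^q equals n. -/
open Equiv Equiv.Perm
open Fin.NatCast

lemma fin_rotate_pow_apply (m k : ℕ) (x : Fin (m+1)) :
    (finRotate (m+1) ^ k) x = x + (k : Fin (m+1)) := by
  induction k with
  | zero => simp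
  | succ k ih => rw [pow_succ', Equiv.Perm.mul_apply, ih, finRotate_succ_apply, Nat.cast_succ, add_assoc]

lemma exists_even_clique (m : ℕ) (hm : 4 ≤ m) :
    ∃ g : Fin (m+1) → Perm (Fin (m+1)),
      (∀ a, Perm.sign (g a) = 1) ∧
      (∀ a b : Fin (m+1), a ≠ b → ∀ x, g a x ≠ g b x) := by
  have h02 : (0 : Fin (m+1)) ≠ 2 := by
    intro h
    have h1 := congrArg Fin.val h
    have h2 : (2 : Fin (m+1)).val = 2 % (m+1) := rfl
    rw [Fin.val_zero, h2, Nat.mod_eq_of_lt (by omega)] at h1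
    omega
  set r : Perm (Fin (m+1)) := finRotate (m+1) with hr
  set π : Perm (Fin (m+1)) := if (m+1) % 2 = 0 then Equiv.swap 0 2 else 1 with hπ
  refine ⟨fun a => r ^ a.val * (if a.val % 2 = 1 then π else 1), ?_, ?_⟩
  · -- signs
    intro a
    have hsr : Perm.sign r = (-1 : ℤˣ) ^ m := by rw [hr, sign_finRotate]; simp
    rw [map_mul, map_pow, hsr, ← pow_mul]
    by_cases hnpar : (m+1) % 2 = 0
    · -- n even, m odd
      have hsπ : Perm.sign π = -1 := by
        rw [hπ, if_pos hnpar, Equiv.Perm.sign_swap h02]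
      by_cases hapar : a.val % 2 = 1
      · rw [if_pos hapar, hsπ]
        have : Odd (m * a.val) := by
          rw [Nat.odd_mul]
          constructor <;> (rw [Nat.odd_iff]; omega)
        rw [this.neg_one_pow]; simp
      · rw [if_neg hapar, map_one, mul_one]
        have : Even (m * a.val) := by
          refine Even.mul_left ?_ m
          simp [Nat.even_iff]; omega
        rw [this.neg_one_pow]
    · -- n odd, m even
      have hπ1 : π = 1 := by rw [hπ, if_neg hnpar]
      have : Even (m * a.val) := by
        refine Even.mul_right ?_ _
        simp [Nat.even_iff]; omega
      rw [this.neg_one_pow]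
      simp [hπ1]
  · -- discordance
    intro a b hab x hcontra
    simp only [Equiv.Perm.mul_apply] at hcontra
    rw [fin_rotate_pow_apply, fin_rotate_pow_apply] at hcontra
    by_cases hpar : a.val % 2 = b.val % 2
    · -- same branch of the if
      have hbranch : (if a.val % 2 = 1 then π else 1) = (if b.val % 2 = 1 then π else 1) := by
        rw [hpar]
      rw [hbranch] at hcontra
      have := add_left_cancel hcontra
      exact hab (by rwa [Fin.cast_val_eq_self, Fin.cast_val_eq_self] at this)
    · -- different parities; look at val mod 2
      -- first: π preserves val % 2 provided (m+1) even or π = 1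
      have hπpar : ∀ y : Fin (m+1), (π y).val % 2 = y.val % 2 := by
        intro y
        by_cases hnpar : (m+1) % 2 = 0
        · rw [hπ, if_pos hnpar]
          have h2v : (2 : Fin (m+1)).val = 2 := by
            have hh : (2 : Fin (m+1)).val = 2 % (m+1) := rfl
            rw [hh]; exact Nat.mod_eq_of_lt (by omega)
          rcases eq_or_ne y 0 with rfl | hy0
          · rw [Equiv.swap_apply_left, h2v, Fin.val_zero]
          · rcases eq_or_ne y 2 with rfl | hy2
            · rw [Equiv.swap_apply_right, Fin.val_zero, h2v]
            · rw [Equiv.swap_apply_of_ne_of_ne hy0 hy2]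
        · rw [hπ, if_neg hnpar]; rfl
      -- if π = 1 then both branch values act same on parity anyway. We need n even
      -- to relate addition in Fin (m+1) to parity of vals.
      by_cases hnpar : (m+1) % 2 = 0
      · have hval : ∀ (y : Fin (m+1)) (c : Fin (m+1)),
            (y + c).val % 2 = (y.val + c.val) % 2 := by
          intro y c
          rw [Fin.val_add]
          exact Nat.mod_mod_of_dvd _ (by omega)
        have h1 := congrArg (fun z : Fin (m+1) => z.val % 2) hcontra
        simp only [Fin.cast_val_eq_self] at h1
        rw [hval, hval] at h1
        have hA : ((if a.val % 2 = 1 then π else 1) x).val % 2 = x.val % 2 := by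
          split
          · exact hπpar x
          · rfl
        have hB : ((if b.val % 2 = 1 then π else 1) x).val % 2 = x.val % 2 := by
          split
          · exact hπpar x
          · rfl
        omega
      · -- n odd: π = 1, so branches coincide
        have hπ1 : π = 1 := by rw [hπ, if_neg hnpar]
        have hbranch : (if a.val % 2 = 1 then π else 1) = (if b.val % 2 = 1 then π else 1) := by
          rw [hπ1]; split <;> split <;> rfl
        rw [hbranch] at hcontra
        have := add_left_cancel hcontra
        exact hab (by rwa [Fin.cast_val_eq_self, Fin.cast_val_eq_self] at this)

/-- the chromatic number of `AΓ_n^q` equals `n` for `q ≥ 1`, `n ≥ 5`. -/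
theorem AGamma_pow_chromaticNumber (n q : ℕ) (hq : 1 ≤ q) (hn : 5 ≤ n) :
    (AGamma n q).chromaticNumber = (n : ℕ∞) := by
  obtain ⟨m, rfl⟩ : ∃ m, n = m + 1 := ⟨n - 1, by omega⟩
  have hm : 4 ≤ m := by omega
  have k0 : Fin q := ⟨0, hq⟩
  have i0 : Fin (m+1) := ⟨0, by omega⟩
  apply le_antisymm
  · -- upper bound via coloring
    have C : (AGamma (m+1) q).Coloring (Fin (m+1)) := by
      refine SimpleGraph.Coloring.mk
        (fun σ => ((σ k0 : Equiv.Perm (Fin (m+1)))) i0) ?_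
      intro σ τ hadj hc
      have hadj : σ ≠ τ ∧ ∀ k, σ k * (τ k)⁻¹ ∈ evenDerangements (m+1) := hadj
      have h := hadj.2 k0 ((σ k0 : Equiv.Perm (Fin (m+1))) i0)
      apply h
      have hc' : (σ k0 : Equiv.Perm (Fin (m+1))) i0
          = (τ k0 : Equiv.Perm (Fin (m+1))) i0 := hc
      simp only [Subgroup.coe_mul, InvMemClass.coe_inv, Equiv.Perm.mul_apply]
      rw [hc']
      simpa using hc' 
    simpa using C.colorable.chromaticNumber_le
  · -- lower bound via clique
    obtain ⟨g, hsign, hdisc⟩ := exists_even_clique m hm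
    set F : Fin (m+1) → (Fin q → alternatingGroup (Fin (m+1))) :=
      fun a _ => ⟨g a, Equiv.Perm.mem_alternatingGroup.mpr (hsign a)⟩ with hF
    have hFinj : Function.Injective F := by
      intro a b hab
      by_contra hne
      have := congrFun hab k0
      rw [Subtype.ext_iff] at this
      exact hdisc a b hne i0 (by rw [show g a = g b from this])
    have emb : (⊤ : SimpleGraph (Fin (m+1))) ↪g AGamma (m+1) q := by
      refine ⟨⟨F, hFinj⟩, ?_⟩
      intro a b
      simp only [SimpleGraph.top_adj, Function.Embedding.coeFn_mk]
      constructor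
      · intro hadj
        intro h
        have hadj : F a ≠ F b ∧ ∀ k, F a k * (F b k)⁻¹ ∈ evenDerangements (m+1) := hadj
        exact hadj.1 (by rw [h])
      · intro hne
        show F a ≠ F b ∧ ∀ k, F a k * (F b k)⁻¹ ∈ evenDerangements (m+1)
        refine ⟨fun h => hne (hFinj h), fun k i => ?_⟩
        simp only [hF, Subgroup.coe_mul, InvMemClass.coe_inv, Equiv.Perm.mul_apply]
        intro hcontra
        have := hdisc a b hne ((g b)⁻¹ i)
        apply this
        rw [hcontra]
        simp
    have hle := SimpleGraph.chromaticNumber_mono_of_hom emb.toHom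
    rwa [SimpleGraph.chromaticNumber_top, Fintype.card_fin] at hle
end
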